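/- arXiv:1611.09197 — 3 statements merged into one kernel-verified Lean document; each statement's English description precedes it below -/
import Mathlib

section
/- If the distribution F is absolutely continuous with respect to Lebesgue measure, then for every R₀ < R Condition (A) holds, i.e. limsup_{θ→±∞} sup_{0≤r≤R₀} |1/(1 − g(r+iθ))| < ∞. -/
open MeasureTheory Filter Complex Set Asymptotics ProbabilityTheory Topology
open scoped FourierTransform

noncomputable section

/-- The residue of `f` at `c`: the limit, as `r → 0⁺`, of `(2πi)⁻¹ ∮_{|z-c|=r} f`. -/
def residue (f : ℂ → ℂ) (c : ℂ) : ℂ :=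
  limUnder (nhdsWithin 0 (Set.Ioi (0 : ℝ)))
    fun r => (2 * Real.pi * Complex.I)⁻¹ * (∮ z in C(c, r), f z)

/-- `n`-fold convolution power of a measure on `ℝ`. -/
def convPow (F : Measure ℝ) : ℕ → Measure ℝ
  | 0 => Measure.dirac 0
  | n + 1 => Measure.map (fun p : ℝ × ℝ => p.1 + p.2) ((convPow F n).prod F)

/-- Renewal function `U(x) = ∑ₙ F^{*n}((-∞, x])`. -/
def renewalFn (F : Measure ℝ) (x : ℝ) : ℝ :=
  (∑' n : ℕ, convPow F n (Set.Iic x)).toReal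

/-- Complex moment generating function `g(z) = ∫ e^{zx} dF(x)`. -/
def cmgf (F : Measure ℝ) (z : ℂ) : ℂ :=
  ∫ x, Complex.exp (z * x) ∂F

/-- `F` is lattice with mesh `1`: supported on `ℕ` but not on `hℕ` for any integer `h > 1`. -/
def LatticeMeshOne (F : Measure ℝ) : Prop :=
  F {x : ℝ | ∀ n : ℕ, x ≠ n} = 0 ∧
    ∀ h : ℕ, 2 ≤ h → 0 < F {x : ℝ | ∀ n : ℕ, x ≠ ((h * n : ℕ) : ℝ)}

/-- Condition (A) at level `R₀`:
`limsup_{θ→±∞} sup_{0 ≤ r ≤ R₀} |1/(1 - g(r+iθ))| < ∞`, phrased as an eventual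
uniform lower bound on `‖1 - g(r+iθ)‖`. -/
def CondA (g : ℂ → ℂ) (R₀ : ℝ) : Prop :=
  ∃ C > (0:ℝ), ∀ᶠ θ : ℝ in (Filter.atTop ⊔ Filter.atBot),
    ∀ r ∈ Set.Icc (0:ℝ) R₀, 1 ≤ C * ‖1 - g ((r : ℂ) + (θ : ℂ) * Complex.I)‖

/-- Mean value type inequality for differences of real exponentials. -/
lemma exp_lip_aux {r r' M x : ℝ} (hx : 0 ≤ x) (hr : r ≤ M) (hr' : r' ≤ M) :
    |Real.exp (r*x) - Real.exp (r'*x)| ≤ |r - r'| * (x * Real.exp (M*x)) := by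
  wlog h : r' ≤ r generalizing r r'
  · rw [abs_sub_comm, abs_sub_comm r r']; exact this hr' hr (le_of_not_ge h)
  have h1 : Real.exp (r'*x) ≤ Real.exp (r*x) :=
    Real.exp_le_exp.2 (mul_le_mul_of_nonneg_right h hx)
  rw [_root_.abs_of_nonneg (sub_nonneg.2 h1), _root_.abs_of_nonneg (sub_nonneg.2 h)]
  have hE : Real.exp (r'*x) = Real.exp (r'*x - r*x) * Real.exp (r*x) := by
    rw [← Real.exp_add]; ring_nf
  have hA := Real.add_one_le_exp (r'*x - r*x)
  have hP : (0:ℝ) < Real.exp (r*x) := Real.exp_pos _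
  have key : Real.exp (r*x) - Real.exp (r'*x) ≤ (r - r') * x * Real.exp (r*x) := by
    nlinarith
  refine key.trans ?_
  have hM : Real.exp (r*x) ≤ Real.exp (M*x) := Real.exp_le_exp.2 (mul_le_mul_of_nonneg_right hr hx)
  have hnn : (0:ℝ) ≤ (r - r') * x := mul_nonneg (sub_nonneg.2 h) hx
  calc (r - r') * x * Real.exp (r*x) ≤ (r - r') * x * Real.exp (M*x) :=
        mul_le_mul_of_nonneg_left hM hnn
    _ = (r - r') * (x * Real.exp (M*x)) := by ring

/-- Riemann–Lebesgue lemma for the complex mgf along vertical lines. -/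
lemma cmgf_tendsto_zero (F : Measure ℝ) [IsProbabilityMeasure F]
    (hac : F ≪ (volume : Measure ℝ)) (r : ℝ) :
    Tendsto (fun θ : ℝ => cmgf F ((r:ℂ) + (θ:ℂ) * Complex.I)) (atTop ⊔ atBot) (𝓝 0) := by
  set f : ℝ → ℂ := fun x => (F.rnDeriv volume x).toReal • Complex.exp (r * x) with hf
  have hRL := Real.tendsto_integral_exp_smul_cocompact f
  have hφ : Tendsto (fun θ : ℝ => -θ / (2 * Real.pi)) (atTop ⊔ atBot) (cocompact ℝ) := by
    rw [cocompact_eq_atBot_atTop]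
    have h2π : (0:ℝ) < 2 * Real.pi := by positivity
    refine tendsto_sup.2 ⟨?_, ?_⟩
    · exact (tendsto_atBot_mono' _ (Eventually.of_forall fun θ => le_rfl)
        ((tendsto_neg_atBot_iff.2 tendsto_id).atBot_div_const h2π)).mono_right le_sup_left
    · exact ((tendsto_neg_atTop_iff.2 tendsto_id).atTop_div_const h2π).mono_right le_sup_right
  have hcomp := hRL.comp hφ
  convert hcomp using 1
  funext θ
  have key : ∀ x : ℝ, (𝐞 (-(x * (-θ / (2 * Real.pi)))) : ℂ) = Complex.exp ((θ:ℂ) * x * Complex.I) := by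
    intro x
    rw [Real.fourierChar_apply]
    congr 2
    push_cast
    have : (Real.pi : ℂ) ≠ 0 := by exact_mod_cast Real.pi_ne_zero
    field_simp
  simp only [Function.comp]
  rw [cmgf, ← MeasureTheory.integral_rnDeriv_smul hac
    (f := fun x : ℝ => Complex.exp (((r:ℂ) + (θ:ℂ) * Complex.I) * (x:ℂ)))]
  congr 1
  funext x
  rw [hf]
  simp only [Circle.smul_def, smul_eq_mul, key x]
  rw [Complex.real_smul, Complex.real_smul]
  have : ((r:ℂ) + (θ:ℂ) * Complex.I) * x = (θ:ℂ) * x * Complex.I + (r:ℂ) * x := by ring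
  rw [this, Complex.exp_add]
  ring

/-- **Proposition (Condition (A) for absolutely continuous distributions).**
If the distribution `F` (a probability measure on `[0,∞)` with `R > 0`) is absolutely
continuous with respect to Lebesgue measure, then for every `R₀ < R` Condition (A) holds:
`limsup_{θ→±∞} sup_{0 ≤ r ≤ R₀} |1/(1 - g(r+iθ))| < ∞`. -/
theorem condA_of_absolutelyContinuous
    (F : Measure ℝ) [IsProbabilityMeasure F]
    (hsupp : F (Set.Iio 0) = 0)
    (hac : F ≪ (volume : Measure ℝ))
    (R₀ : ℝ) (hR₀ltR : ∃ r > R₀, Integrable (fun x => Real.exp (r * x)) F) :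
    CondA (cmgf F) R₀ := by
  obtain ⟨r₁, hr₁, hint⟩ := hR₀ltR
  have hx0 : ∀ᵐ x ∂F, 0 ≤ x := by
    rw [ae_iff]
    convert hsupp using 2
    ext x
    simp [not_le]
  -- integrability of the complex exponentials
  have hintC : ∀ s : ℝ, s ≤ r₁ → ∀ θ : ℝ,
      Integrable (fun x : ℝ => Complex.exp (((s:ℂ) + (θ:ℂ) * Complex.I) * x)) F := by
    intro s hs θ
    refine hint.mono ?_ ?_
    · exact (Complex.continuous_exp.comp (by continuity)).aestronglyMeasurable
    · filter_upwards [hx0] with x hx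
      have hre : (((s:ℂ) + (θ:ℂ) * Complex.I) * x).re = s * x := by
        simp [Complex.add_re, Complex.mul_re]
      rw [Complex.norm_exp, hre, Real.norm_eq_abs,
        _root_.abs_of_nonneg (Real.exp_pos _).le]
      exact Real.exp_le_exp.2 (mul_le_mul_of_nonneg_right hs hx)
  -- integrability of x e^{R₀ x}
  have hφmeas : AEStronglyMeasurable (fun x : ℝ => x * Real.exp (R₀ * x)) F :=
    (continuous_id.mul (Real.continuous_exp.comp (continuous_const.mul continuous_id))).aestronglyMeasurable
  have hφ : Integrable (fun x : ℝ => x * Real.exp (R₀ * x)) F := by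
    have h1 : Integrable (fun x : ℝ => (r₁ - R₀)⁻¹ * Real.exp (r₁ * x)) F := hint.const_mul _
    refine h1.mono hφmeas ?_
    filter_upwards [hx0] with x hx
    have hd : (0:ℝ) < r₁ - R₀ := by linarith
    have hA : (0:ℝ) < Real.exp (R₀ * x) := Real.exp_pos _
    have hEq : Real.exp (r₁ * x) = Real.exp ((r₁ - R₀) * x) * Real.exp (R₀ * x) := by
      rw [← Real.exp_add]; ring_nf
    have ht := Real.add_one_le_exp ((r₁ - R₀) * x)
    rw [Real.norm_eq_abs, Real.norm_eq_abs, _root_.abs_of_nonneg (by positivity),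
      _root_.abs_of_nonneg (by positivity)]
    rw [inv_mul_eq_div, le_div_iff₀ hd]
    nlinarith
  set L := ∫ x, x * Real.exp (R₀ * x) ∂F with hLdef
  have hL0 : 0 ≤ L :=
    integral_nonneg_of_ae (by filter_upwards [hx0] with x hx; positivity)
  set δ : ℝ := (4 * (L + 1))⁻¹ with hδdef
  have hδ0 : 0 < δ := by positivity
  -- Lipschitz bound in the real part
  have hlip : ∀ θ : ℝ, ∀ r r' : ℝ, r ≤ R₀ → r' ≤ R₀ →
      ‖cmgf F ((r:ℂ) + (θ:ℂ) * Complex.I) - cmgf F ((r':ℂ) + (θ:ℂ) * Complex.I)‖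
        ≤ L * |r - r'| := by
    intro θ r r' hr hr'
    have hi1 := hintC r (hr.trans hr₁.le) θ
    have hi2 := hintC r' (hr'.trans hr₁.le) θ
    rw [cmgf, cmgf, ← integral_sub hi1 hi2]
    refine (norm_integral_le_integral_norm _).trans ?_
    have hmono : ∫ x, ‖Complex.exp (((r:ℂ) + (θ:ℂ) * Complex.I) * x)
          - Complex.exp (((r':ℂ) + (θ:ℂ) * Complex.I) * x)‖ ∂F
        ≤ ∫ x, |r - r'| * (x * Real.exp (R₀ * x)) ∂F := by
      refine integral_mono_ae (hi1.sub hi2).norm (hφ.const_mul _) ?_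
      filter_upwards [hx0] with x hx
      have e1 : ((r:ℂ) + (θ:ℂ) * Complex.I) * x
          = (θ:ℂ) * x * Complex.I + ((r * x : ℝ) : ℂ) := by push_cast; ring
      have e2 : ((r':ℂ) + (θ:ℂ) * Complex.I) * x
          = (θ:ℂ) * x * Complex.I + ((r' * x : ℝ) : ℂ) := by push_cast; ring
      rw [e1, e2, Complex.exp_add, Complex.exp_add, ← mul_sub, norm_mul]
      have hn1 : ‖Complex.exp ((θ:ℂ) * x * Complex.I)‖ = 1 := by
        rw [Complex.norm_exp]
        simp [Complex.mul_re]
      rw [hn1, one_mul, ← Complex.ofReal_exp, ← Complex.ofReal_exp, ← Complex.ofReal_sub,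
        Complex.norm_real, Real.norm_eq_abs]
      exact exp_lip_aux hx hr hr'
    refine hmono.trans ?_
    rw [integral_const_mul]
    rw [← hLdef]
    ring_nf
    exact le_rfl
  -- eventual smallness at each fixed abscissa
  have hsmall : ∀ s : ℝ, ∀ᶠ θ : ℝ in atTop ⊔ atBot,
      ‖cmgf F ((s:ℂ) + (θ:ℂ) * Complex.I)‖ < 4⁻¹ := by
    intro s
    have h4 : ∀ᶠ z : ℂ in 𝓝 0, ‖z‖ < 4⁻¹ := by
      have hb : Metric.ball (0:ℂ) 4⁻¹ ∈ 𝓝 (0:ℂ) := Metric.ball_mem_nhds _ (by norm_num)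
      filter_upwards [hb] with z hz
      simpa [Metric.mem_ball, dist_zero_right] using hz
    exact (cmgf_tendsto_zero F hac s).eventually h4
  -- compactness: finite net
  have hcov : Icc (0:ℝ) R₀ ⊆ ⋃ i : Icc (0:ℝ) R₀, Metric.ball (i:ℝ) δ := fun x hx =>
    mem_iUnion.2 ⟨⟨x, hx⟩, Metric.mem_ball_self hδ0⟩
  obtain ⟨t, ht⟩ := isCompact_Icc.elim_finite_subcover
    (fun i : Icc (0:ℝ) R₀ => Metric.ball (i:ℝ) δ) (fun i => Metric.isOpen_ball) hcov
  have hev : ∀ᶠ θ : ℝ in atTop ⊔ atBot, ∀ i ∈ t,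
      ‖cmgf F (((i:ℝ):ℂ) + (θ:ℂ) * Complex.I)‖ < 4⁻¹ :=
    t.eventually_all.2 fun i _ => hsmall (i:ℝ)
  refine ⟨2, by norm_num, ?_⟩
  filter_upwards [hev] with θ hθ r hrIcc
  obtain ⟨i, hit, hri⟩ := mem_iUnion₂.1 (ht hrIcc)
  rw [Metric.mem_ball, Real.dist_eq] at hri
  have hb := hlip θ r (i:ℝ) hrIcc.2 i.2.2
  have hLδ : L * δ ≤ 4⁻¹ := by
    have h1 : L * δ ≤ (L + 1) * δ := mul_le_mul_of_nonneg_right (by linarith) hδ0.le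
    have h2 : (L + 1) * δ = 4⁻¹ := by
      rw [hδdef]; field_simp
    linarith
  have hLr : L * |r - (i:ℝ)| ≤ L * δ := mul_le_mul_of_nonneg_left hri.le hL0
  have hgr : ‖cmgf F ((r:ℂ) + (θ:ℂ) * Complex.I)‖ ≤ 2⁻¹ := by
    have h3 := norm_sub_norm_le (cmgf F ((r:ℂ) + (θ:ℂ) * Complex.I))
      (cmgf F (((i:ℝ):ℂ) + (θ:ℂ) * Complex.I))
    have h4 := hθ i hit
    have : ‖cmgf F ((r:ℂ) + (θ:ℂ) * Complex.I)‖
        ≤ ‖cmgf F (((i:ℝ):ℂ) + (θ:ℂ) * Complex.I)‖ + L * |r - (i:ℝ)| := by linarith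
    linarith [this.trans (by linarith : ‖cmgf F (((i:ℝ):ℂ) + (θ:ℂ) * Complex.I)‖
      + L * |r - (i:ℝ)| ≤ 4⁻¹ + 4⁻¹)]
  have h5 := norm_sub_norm_le (1:ℂ) (cmgf F ((r:ℂ) + (θ:ℂ) * Complex.I))
  rw [norm_one] at h5
  linarith

end
end

section
/- If the distribution F is absolutely continuous with respect to Lebesgue measure, then for every R₀ < R one has the uniform Riemann–Lebesgue property: lim_{θ→±∞} sup_{0≤r≤R₀} |g(r + iθ)| = 0. -/
open MeasureTheory Filter Complex Set Asymptotics ProbabilityTheory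
open scoped Topology FourierTransform

noncomputable section

/-- **Uniform Riemann–Lebesgue property.**
If `F` is absolutely continuous with respect to Lebesgue measure, then for every `R₀ < R`,
`lim_{θ→±∞} sup_{0 ≤ r ≤ R₀} |g(r + iθ)| = 0`, i.e. `g(r+iθ) → 0` as `θ → ±∞`,
uniformly in `r ∈ [0, R₀]`. -/
theorem uniform_riemann_lebesgue
    (F : Measure ℝ) [IsProbabilityMeasure F]
    (hsupp : F (Set.Iio 0) = 0)
    (hac : F ≪ (volume : Measure ℝ))
    (R₀ : ℝ) (hR₀ltR : ∃ r > R₀, Integrable (fun x => Real.exp (r * x)) F) :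
    ∀ ε > (0:ℝ), ∀ᶠ θ : ℝ in (Filter.atTop ⊔ Filter.atBot),
      ∀ r ∈ Set.Icc (0:ℝ) R₀, ‖cmgf F ((r : ℂ) + (θ : ℂ) * Complex.I)‖ < ε := by
  intro ε hε
  obtain ⟨r₁, hr₁, hint⟩ := hR₀ltR
  rcases lt_or_ge R₀ 0 with hneg | hR₀0
  · filter_upwards with θ r hr
    exact absurd (hr.1.trans hr.2) hneg.not_ge
  -- dominating bound
  have hbound : ∀ r ∈ Set.Icc (0:ℝ) R₀, ∀ x : ℝ,
      Real.exp (r * x) ≤ 1 + Real.exp (r₁ * x) := by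
    intro r hr x
    rcases le_or_gt x 0 with hx | hx
    · have h1 : Real.exp (r * x) ≤ 1 := Real.exp_le_one_iff.mpr (by nlinarith [hr.1])
      nlinarith [Real.exp_pos (r₁ * x)]
    · have h1 : r * x ≤ r₁ * x := by nlinarith [hr.2, hr.1]
      have := Real.exp_le_exp.mpr h1
      linarith
  have hG : Integrable (fun x : ℝ => 1 + Real.exp (r₁ * x)) F :=
    (integrable_const 1).add hint
  -- integrability of the complex exponentials
  have hint_exp : ∀ z : ℂ, z.re ∈ Set.Icc (0:ℝ) R₀ →
      Integrable (fun x : ℝ => Complex.exp (z * x)) F := by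
    intro z hz
    refine hG.mono' ?_ ?_
    · exact (Complex.continuous_exp.comp
        (continuous_const.mul Complex.continuous_ofReal)).aestronglyMeasurable
    · filter_upwards with x
      rw [Complex.norm_exp]
      have hre : (z * (x:ℂ)).re = z.re * x := by simp [Complex.mul_re]
      rw [hre]
      exact hbound _ hz x
  -- Riemann-Lebesgue for a fixed vertical line abscissa
  have hRL : ∀ s : ℝ, Tendsto (fun θ : ℝ =>
      ∫ x, Complex.exp (((s:ℂ) + (θ:ℂ) * Complex.I) * x) ∂F)
      (Filter.atTop ⊔ Filter.atBot) (𝓝 0) := by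
    intro s
    set h : ℝ → ℂ := fun x => (F.rnDeriv volume x).toReal •
      Complex.exp ((s:ℂ) * x) with hh
    have key : ∀ θ : ℝ, ∫ x, Complex.exp (((s:ℂ) + (θ:ℂ) * Complex.I) * x) ∂F
        = ∫ x : ℝ, 𝐞 (-(x * (-θ / (2 * Real.pi)))) • h x := by
      intro θ
      rw [← MeasureTheory.integral_rnDeriv_smul hac
        (f := fun x : ℝ => Complex.exp (((s:ℂ) + (θ:ℂ) * Complex.I) * x))]
      refine integral_congr_ae (Filter.Eventually.of_forall fun x => ?_)
      dsimp only
      rw [Circle.smul_def, Real.fourierChar_apply, hh]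
      simp only [smul_eq_mul]
      have h2 : ((2 * Real.pi * -(x * (-θ / (2 * Real.pi))) : ℝ) : ℂ) * Complex.I
          = (θ:ℂ) * (x:ℂ) * Complex.I := by
        have hπ : (2 * Real.pi : ℝ) ≠ 0 := by positivity
        have : (2 * Real.pi * -(x * (-θ / (2 * Real.pi))) : ℝ) = θ * x := by
          field_simp
        rw [this]; push_cast; ring
      rw [h2, show ((s:ℂ) + (θ:ℂ) * Complex.I) * (x:ℂ)
        = (θ:ℂ) * (x:ℂ) * Complex.I + (s:ℂ) * (x:ℂ) by ring, Complex.exp_add]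
      simp only [Complex.real_smul]
      ring
    simp only [key]
    have hmap : Tendsto (fun θ : ℝ => -θ / (2 * Real.pi))
        (Filter.atTop ⊔ Filter.atBot) (cocompact ℝ) := by
      rw [cocompact_eq_atBot_atTop]
      have hc : (-(2 * Real.pi)⁻¹ : ℝ) < 0 := by
        simp only [neg_neg, Left.neg_neg_iff]
        positivity
      have heq : (fun θ : ℝ => -θ / (2 * Real.pi))
          = fun θ : ℝ => θ * (-(2 * Real.pi)⁻¹) := by
        funext θ; field_simp
      rw [heq]
      refine Filter.tendsto_sup.mpr ⟨?_, ?_⟩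
      · exact (tendsto_id.atTop_mul_const_of_neg hc).mono_right le_sup_left
      · exact (tendsto_id.atBot_mul_const_of_neg hc).mono_right le_sup_right
    exact (Real.tendsto_integral_exp_smul_cocompact h).comp hmap
  -- continuity in r, giving good neighborhoods
  have hcover : ∀ s ∈ Set.Icc (0:ℝ) R₀, ∃ U : Set ℝ, IsOpen U ∧ s ∈ U ∧
      ∀ r ∈ U ∩ Set.Icc (0:ℝ) R₀,
        ∫ x, |Real.exp (r * x) - Real.exp (s * x)| ∂F < ε / 2 := by
    intro s hs
    have hDCT : Tendsto (fun r : ℝ => ∫ x, |Real.exp (r * x) - Real.exp (s * x)| ∂F)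
        (nhdsWithin s (Set.Icc (0:ℝ) R₀)) (𝓝 0) := by
      have hDCT' : Tendsto (fun r : ℝ => ∫ x, |Real.exp (r * x) - Real.exp (s * x)| ∂F)
          (nhdsWithin s (Set.Icc (0:ℝ) R₀)) (𝓝 (∫ _ : ℝ, (0:ℝ) ∂F)) := by
        refine tendsto_integral_filter_of_dominated_convergence
          (fun x => 2 * (1 + Real.exp (r₁ * x))) ?_ ?_ (hG.const_mul 2) ?_
        · filter_upwards with r
          exact Continuous.aestronglyMeasurable (by fun_prop)
        · filter_upwards [eventually_mem_nhdsWithin] with r hr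
          filter_upwards with x
          rw [Real.norm_eq_abs, _root_.abs_abs]
          have ha := hbound r hr x
          have hb := hbound s hs x
          have h1 := abs_sub (Real.exp (r * x)) (Real.exp (s * x))
          rw [abs_of_pos (Real.exp_pos _), abs_of_pos (Real.exp_pos _)] at h1
          linarith
        · filter_upwards with x
          have hc : Continuous fun r : ℝ => |Real.exp (r * x) - Real.exp (s * x)| := by
            fun_prop
          have h3 : Tendsto (fun r : ℝ => |Real.exp (r * x) - Real.exp (s * x)|)
              (nhdsWithin s (Set.Icc (0:ℝ) R₀)) (𝓝 |Real.exp (s * x) - Real.exp (s * x)|) :=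
            (hc.tendsto s).mono_left nhdsWithin_le_nhds
          simpa using h3
      simpa using hDCT'
    have hev : ∀ᶠ r in nhdsWithin s (Set.Icc (0:ℝ) R₀),
        ∫ x, |Real.exp (r * x) - Real.exp (s * x)| ∂F < ε / 2 := by
      exact hDCT (Iio_mem_nhds (half_pos hε))
    rw [eventually_nhdsWithin_iff, eventually_nhds_iff] at hev
    obtain ⟨U, hU1, hU2, hU3⟩ := hev
    exact ⟨U, hU2, hU3, fun r hr => hU1 r hr.1 hr.2⟩
  choose! U hUo hsU hUlt using hcover
  obtain ⟨T, hTmem, hTcov⟩ := isCompact_Icc.elim_nhds_subcover U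
    (fun s hs => (hUo s hs).mem_nhds (hsU s hs))
  have hev : ∀ᶠ θ : ℝ in Filter.atTop ⊔ Filter.atBot, ∀ s ∈ T,
      ‖∫ x, Complex.exp (((s:ℂ) + (θ:ℂ) * Complex.I) * x) ∂F‖ < ε / 2 := by
    rw [Filter.eventually_all_finset]
    intro s _
    exact NormedAddCommGroup.tendsto_nhds_zero.mp (hRL s) (ε / 2) (half_pos hε)
  filter_upwards [hev] with θ hθ r hr
  obtain ⟨s, hsT, hrU⟩ : ∃ s ∈ T, r ∈ U s := by
    have := hTcov hr
    simpa using this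
  have hsIcc : s ∈ Set.Icc (0:ℝ) R₀ := hTmem s hsT
  have h1 : Integrable (fun x : ℝ => Complex.exp (((r:ℂ) + (θ:ℂ) * Complex.I) * x)) F :=
    hint_exp _ (by simpa using hr)
  have h2 : Integrable (fun x : ℝ => Complex.exp (((s:ℂ) + (θ:ℂ) * Complex.I) * x)) F :=
    hint_exp _ (by simpa using hsIcc)
  have hnorm : ∀ x : ℝ,
      ‖Complex.exp (((r:ℂ) + (θ:ℂ) * Complex.I) * x)
        - Complex.exp (((s:ℂ) + (θ:ℂ) * Complex.I) * x)‖
      = |Real.exp (r * x) - Real.exp (s * x)| := by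
    intro x
    have e1 : ∀ t : ℝ, Complex.exp (((t:ℂ) + (θ:ℂ) * Complex.I) * x)
        = (Real.exp (t * x) : ℂ) * Complex.exp (((θ * x : ℝ) : ℂ) * Complex.I) := by
      intro t
      rw [Complex.ofReal_exp, ← Complex.exp_add]
      congr 1
      push_cast
      ring
    rw [e1, e1, ← sub_mul, norm_mul, ← Complex.ofReal_sub, Complex.norm_real,
      Complex.norm_exp_ofReal_mul_I, mul_one,
      Real.norm_eq_abs]
  have hdiff : ‖(∫ x, Complex.exp (((r:ℂ) + (θ:ℂ) * Complex.I) * x) ∂F)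
      - ∫ x, Complex.exp (((s:ℂ) + (θ:ℂ) * Complex.I) * x) ∂F‖ < ε / 2 := by
    rw [← integral_sub h1 h2]
    calc ‖∫ x, (Complex.exp (((r:ℂ) + (θ:ℂ) * Complex.I) * x)
          - Complex.exp (((s:ℂ) + (θ:ℂ) * Complex.I) * x)) ∂F‖
        ≤ ∫ x, ‖Complex.exp (((r:ℂ) + (θ:ℂ) * Complex.I) * x)
          - Complex.exp (((s:ℂ) + (θ:ℂ) * Complex.I) * x)‖ ∂F :=
          norm_integral_le_integral_norm _
      _ = ∫ x, |Real.exp (r * x) - Real.exp (s * x)| ∂F :=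
          integral_congr_ae (Filter.Eventually.of_forall fun x => hnorm x)
      _ < ε / 2 := hUlt s hsIcc r ⟨hrU, hr⟩
  have : ‖cmgf F ((r:ℂ) + (θ:ℂ) * Complex.I)‖
      = ‖∫ x, Complex.exp (((r:ℂ) + (θ:ℂ) * Complex.I) * x) ∂F‖ := rfl
  rw [this]
  calc ‖∫ x, Complex.exp (((r:ℂ) + (θ:ℂ) * Complex.I) * x) ∂F‖
      ≤ ‖(∫ x, Complex.exp (((r:ℂ) + (θ:ℂ) * Complex.I) * x) ∂F)
          - ∫ x, Complex.exp (((s:ℂ) + (θ:ℂ) * Complex.I) * x) ∂F‖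
        + ‖∫ x, Complex.exp (((s:ℂ) + (θ:ℂ) * Complex.I) * x) ∂F‖ :=
        by
          rw [congrArg Norm.norm (show (∫ x, Complex.exp (((r:ℂ) + (θ:ℂ) * Complex.I) * x) ∂F)
            = ((∫ x, Complex.exp (((r:ℂ) + (θ:ℂ) * Complex.I) * x) ∂F)
              - ∫ x, Complex.exp (((s:ℂ) + (θ:ℂ) * Complex.I) * x) ∂F)
              + ∫ x, Complex.exp (((s:ℂ) + (θ:ℂ) * Complex.I) * x) ∂F by ring)]
          exact norm_add_le _ _
    _ < ε / 2 + ε / 2 := add_lt_add hdiff (hθ s hsT)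
    _ = ε := add_halves ε


end
end

section
/- If Condition (A) holds at level R₀ < R, then the equation g(z) = 1 has only finitely many solutions in S_{R₀} = {z ∈ ℂ : Re z < R₀}; moreover every such solution satisfies 0 ≤ Re z ≤ R₀ and lies in a compact rectangle {0 ≤ Re z ≤ R₀, |Im z| ≤ M} for some M > 0. -/
open MeasureTheory Filter Complex Set Asymptotics ProbabilityTheory

noncomputable section

lemma norm_cexp_mul (z : ℂ) (x : ℝ) : ‖Complex.exp (z * x)‖ = Real.exp (z.re * x) := by
  rw [Complex.norm_exp]
  congr 1
  simp [Complex.mul_re]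

lemma ae_nonneg {F : Measure ℝ} (hsupp : F (Set.Iio 0) = 0) : ∀ᵐ x ∂F, 0 ≤ x := by
  rw [ae_iff]
  convert hsupp using 2
  ext x; simp [Set.mem_Iio, not_le]

lemma integrable_cexp {F : Measure ℝ} (hsupp : F (Set.Iio 0) = 0) {r : ℝ}
    (hr : Integrable (fun x => Real.exp (r * x)) F) {z : ℂ} (hz : z.re ≤ r) :
    Integrable (fun x : ℝ => Complex.exp (z * (x:ℂ))) F := by
  refine hr.mono' ?_ ?_
  · exact (Complex.continuous_exp.comp (continuous_const.mul Complex.continuous_ofReal)).aestronglyMeasurable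
  · filter_upwards [ae_nonneg hsupp] with x hx
    rw [norm_cexp_mul]
    exact Real.exp_le_exp.2 (mul_le_mul_of_nonneg_right hz hx)

lemma hasDerivAt_cmgf {F : Measure ℝ} (hsupp : F (Set.Iio 0) = 0) {r : ℝ}
    (hr : Integrable (fun x => Real.exp (r * x)) F) {z₀ : ℂ} (hz₀ : z₀.re < r) :
    HasDerivAt (cmgf F) (∫ x, Complex.exp (z₀ * x) * x ∂F) z₀ := by
  set ε : ℝ := (r - z₀.re) / 2 with hε
  have hεpos : 0 < ε := by rw [hε]; linarith
  have key := hasDerivAt_integral_of_dominated_loc_of_deriv_le (μ := F)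
    (F := fun z x => Complex.exp (z * x)) (F' := fun z x => Complex.exp (z * x) * x)
    (x₀ := z₀) (bound := fun x => ε⁻¹ * Real.exp (r * x)) (Metric.ball_mem_nhds z₀ hεpos)
    (Eventually.of_forall fun z =>
      (Complex.continuous_exp.comp (continuous_const.mul Complex.continuous_ofReal)).aestronglyMeasurable)
    (integrable_cexp hsupp hr hz₀.le)
    (((Complex.continuous_exp.comp (continuous_const.mul Complex.continuous_ofReal)).mul
      Complex.continuous_ofReal).aestronglyMeasurable)
    ?_ (hr.const_mul ε⁻¹) ?_
  · exact key.2
  · filter_upwards [ae_nonneg hsupp] with x hx z hz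
    have hzre : z.re ≤ z₀.re + ε := by
      have h1 : |(z - z₀).re| ≤ ‖z - z₀‖ := Complex.abs_re_le_norm _
      have h2 : ‖z - z₀‖ < ε := by
        rw [Metric.mem_ball, Complex.dist_eq] at hz; exact hz
      have := (abs_le.1 (h1.trans h2.le)).2
      simp only [Complex.sub_re] at this
      linarith
    have hxb : x ≤ ε⁻¹ * Real.exp (ε * x) := by
      have h := Real.add_one_le_exp (ε * x)
      rw [inv_mul_eq_div, le_div_iff₀ hεpos]
      nlinarith
    rw [norm_mul, norm_cexp_mul, Complex.norm_real, Real.norm_eq_abs, _root_.abs_of_nonneg hx]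
    calc Real.exp (z.re * x) * x ≤ Real.exp (z.re * x) * (ε⁻¹ * Real.exp (ε * x)) :=
          mul_le_mul_of_nonneg_left hxb (Real.exp_pos _).le
      _ = ε⁻¹ * Real.exp (z.re * x + ε * x) := by rw [Real.exp_add]; ring
      _ ≤ ε⁻¹ * Real.exp (r * x) := by
          gcongr
          nlinarith
  · filter_upwards with x z _
    have h : HasDerivAt (fun z : ℂ => z * (x:ℂ)) (x:ℂ) z := hasDerivAt_mul_const _
    exact h.cexp

/-- **Finitely many roots of `g(z) = 1` under Condition (A).**
If Condition (A) holds at level `R₀ < R`, then the equation `g(z) = 1` has only finitely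
many solutions in `S_{R₀} = {Re z < R₀}`; moreover every such solution satisfies
`0 ≤ Re z ≤ R₀` and lies in a compact rectangle `{0 ≤ Re z ≤ R₀, |Im z| ≤ M}`. -/
theorem finite_roots_of_condA
    (F : Measure ℝ) [IsProbabilityMeasure F]
    (hsupp : F (Set.Iio 0) = 0)
    (R₀ : ℝ) (hR₀pos : 0 < R₀)
    (hR₀ltR : ∃ r > R₀, Integrable (fun x => Real.exp (r * x)) F)
    (hA : CondA (cmgf F) R₀) :
    {z : ℂ | z.re < R₀ ∧ cmgf F z = 1}.Finite ∧
    ∃ M > (0:ℝ), ∀ z : ℂ, z.re < R₀ → cmgf F z = 1 →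
      0 ≤ z.re ∧ z.re ≤ R₀ ∧ |z.im| ≤ M := by
  obtain ⟨r, hrR₀, hrInt⟩ := hR₀ltR
  have hrpos : 0 < r := lt_trans hR₀pos hrR₀
  obtain ⟨C, hCpos, hev⟩ := hA
  rw [Filter.eventually_sup] at hev
  obtain ⟨hTop, hBot⟩ := hev
  obtain ⟨M₁, hM₁⟩ := Filter.eventually_atTop.mp hTop
  obtain ⟨M₂, hM₂⟩ := Filter.eventually_atBot.mp hBot
  set θ₀ : ℝ := max M₁ 1 with hθ₀
  have hθ₀P := hM₁ θ₀ (le_max_left _ _)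
  have hg0 : cmgf F (((0:ℝ):ℂ) + (θ₀:ℂ) * Complex.I) ≠ 1 := by
    intro h
    have h0 := hθ₀P 0 ⟨le_refl 0, hR₀pos.le⟩
    rw [h] at h0
    simp at h0
    linarith
  have hdeg : ¬ (∀ᵐ x ∂F, x = 0) := by
    intro hae
    apply hg0
    have hone : ∀ᵐ x : ℝ ∂F, Complex.exp ((((0:ℝ):ℂ) + (θ₀:ℂ) * Complex.I) * (x:ℂ)) = 1 := by
      filter_upwards [hae] with x hx
      simp [hx]
    show (∫ x : ℝ, Complex.exp ((((0:ℝ):ℂ) + (θ₀:ℂ) * Complex.I) * (x:ℂ)) ∂F) = 1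
    rw [integral_congr_ae hone]
    simp
  have hre : ∀ z : ℂ, cmgf F z = 1 → 0 ≤ z.re := by
    intro z hz1
    by_contra hneg
    push_neg at hneg
    have hIntC : Integrable (fun x : ℝ => Complex.exp (z * (x:ℂ))) F :=
      integrable_cexp hsupp hrInt (by linarith)
    have hIntR : Integrable (fun x : ℝ => Real.exp (z.re * x)) F := by
      refine hIntC.norm.congr (Eventually.of_forall fun x => ?_)
      exact norm_cexp_mul z x
    have h1le : (1:ℝ) ≤ ∫ x, Real.exp (z.re * x) ∂F := by
      have h := norm_integral_le_integral_norm (f := fun x : ℝ => Complex.exp (z * (x:ℂ))) (μ := F)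
      rw [show (∫ x : ℝ, Complex.exp (z * (x:ℂ)) ∂F) = cmgf F z from rfl, hz1,
        integral_congr_ae (Eventually.of_forall fun x => norm_cexp_mul z x)] at h
      simpa using h
    have hle1 : ∫ x, Real.exp (z.re * x) ∂F ≤ 1 := by
      have h : ∫ x, Real.exp (z.re * x) ∂F ≤ ∫ _x, (1:ℝ) ∂F := by
        refine integral_mono_ae hIntR (integrable_const 1) ?_
        filter_upwards [ae_nonneg hsupp] with x hx
        calc Real.exp (z.re * x) ≤ Real.exp 0 := Real.exp_le_exp.2 (by nlinarith)
          _ = 1 := Real.exp_zero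
      simpa using h
    have heq1 : ∫ x, Real.exp (z.re * x) ∂F = 1 := le_antisymm hle1 h1le
    have hz0 : ∫ x, (1 - Real.exp (z.re * x)) ∂F = 0 := by
      rw [integral_sub (integrable_const 1) hIntR, heq1]
      simp
    have hnn : 0 ≤ᵐ[F] fun x => 1 - Real.exp (z.re * x) := by
      filter_upwards [ae_nonneg hsupp] with x hx
      have hle : Real.exp (z.re * x) ≤ 1 := by
        rw [← Real.exp_zero]
        exact Real.exp_le_exp.2 (by nlinarith)
      simp only [Pi.zero_apply]
      linarith
    have hae0 := (integral_eq_zero_iff_of_nonneg_ae hnn ((integrable_const 1).sub hIntR)).mp hz0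
    apply hdeg
    filter_upwards [hae0] with x hx
    simp only [Pi.zero_apply] at hx
    have hx1 : Real.exp (z.re * x) = 1 := by linarith
    have hx2 : z.re * x = 0 := Real.exp_injective (by rw [hx1, Real.exp_zero])
    rcases mul_eq_zero.mp hx2 with h | h
    · exact absurd h (ne_of_lt hneg)
    · exact h
  set M : ℝ := max (max M₁ (-M₂)) 1 with hM_def
  have hMpos : (0:ℝ) < M := lt_of_lt_of_le one_pos (le_max_right _ _)
  have hM : ∀ z : ℂ, z.re < R₀ → cmgf F z = 1 → |z.im| ≤ M := by
    intro z hz hz1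
    by_contra hgt
    push_neg at hgt
    have hmemIcc : z.re ∈ Set.Icc (0:ℝ) R₀ := ⟨hre z hz1, hz.le⟩
    rcases lt_abs.mp hgt with h | h
    · have hp := hM₁ z.im (le_trans (le_trans (le_max_left _ _) (le_max_left _ _)) h.le)
      have := hp z.re hmemIcc
      rw [Complex.re_add_im, hz1] at this
      simp at this
      linarith
    · have hle : z.im ≤ M₂ := by
        have : -M₂ ≤ M := le_trans (le_max_right _ _) (le_max_left _ _)
        linarith
      have hp := hM₂ z.im hle
      have := hp z.re hmemIcc
      rw [Complex.re_add_im, hz1] at this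
      simp at this
      linarith
  refine ⟨?_, M, hMpos, fun z hz h1 => ⟨hre z h1, hz.le, hM z hz h1⟩⟩
  by_contra hfin
  have hinf : {z : ℂ | z.re < R₀ ∧ cmgf F z = 1}.Infinite := hfin
  set U : Set ℂ := {w : ℂ | w.re < r} with hU_def
  have hUopen : IsOpen U := isOpen_lt Complex.continuous_re continuous_const
  have hAnal : AnalyticOnNhd ℂ (cmgf F) U := by
    refine DifferentiableOn.analyticOnNhd (fun w hw => ?_) hUopen
    exact ((hasDerivAt_cmgf hsupp hrInt hw).differentiableAt).differentiableWithinAt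
  set K : Set ℂ := Complex.re ⁻¹' Set.Icc 0 R₀ ∩ Complex.im ⁻¹' Set.Icc (-M) M with hK_def
  have hKcl : IsClosed K :=
    (isClosed_Icc.preimage Complex.continuous_re).inter (isClosed_Icc.preimage Complex.continuous_im)
  have hKbd : Bornology.IsBounded K := by
    apply (Metric.isBounded_closedBall (x := (0:ℂ)) (r := R₀ + M)).subset
    intro w hw
    obtain ⟨⟨h2, h3⟩, h4, h5⟩ := hw
    rw [Metric.mem_closedBall, dist_zero_right]
    have h1 := Complex.norm_le_abs_re_add_abs_im w
    have hre' : |w.re| ≤ R₀ := abs_le.mpr ⟨by linarith, h3⟩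
    have him' : |w.im| ≤ M := abs_le.mpr ⟨h4, h5⟩
    linarith
  have hKcp : IsCompact K := Metric.isCompact_of_isClosed_isBounded hKcl hKbd
  have hsub : {z : ℂ | z.re < R₀ ∧ cmgf F z = 1} ⊆ K := by
    intro w hw
    have habs := hM w hw.1 hw.2
    exact ⟨⟨hre w hw.2, hw.1.le⟩, (abs_le.mp habs).1, (abs_le.mp habs).2⟩
  obtain ⟨z₀, hz₀K, hacc⟩ := hinf.exists_accPt_of_subset_isCompact hKcp hsub
  have hz₀U : z₀ ∈ U := lt_of_le_of_lt hz₀K.1.2 hrR₀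
  have hfreq : ∃ᶠ w in nhdsWithin z₀ {z₀}ᶜ, cmgf F w = (fun _ => (1:ℂ)) w := by
    rw [frequently_nhdsWithin_iff]
    exact (accPt_iff_frequently.mp hacc).mono fun w hw => ⟨hw.2.2, hw.1⟩
  have heq := hAnal.eqOn_of_preconnected_of_frequently_eq analyticOnNhd_const
    (convex_halfSpace_re_lt r).isPreconnected hz₀U hfreq
  apply hg0
  have hmem : (((0:ℝ):ℂ) + (θ₀:ℂ) * Complex.I) ∈ U := by
    simp only [hU_def, Set.mem_setOf_eq]
    simp
    linarith
  exact heq hmem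


end
end
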